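/- Andréief's identity: for integrable functions f_1,...,f_n, g_1,...,g_n on ℝ with respect to a Borel measure ν, the integral over the ordered simplex {x_1 ≤ x_2 ≤ ... ≤ x_n} of det(f_j(x_i)) · det(g_j(x_i)) with respect to ν^n equals det( ∫_ℝ f_i(x) g_j(x) dν(x) )_{1≤i,j≤n}. -/

import Mathlib

open MeasureTheory

namespace AndreiefAux


theorem integrable_pi_prod (ν : Measure ℝ) [SigmaFinite ν] :
    ∀ {n : ℕ} (φ : Fin n → ℝ → ℝ), (∀ i, Integrable (φ i) ν) →
      Integrable (fun x : Fin n → ℝ => ∏ i, φ i (x i)) (Measure.pi fun _ => ν)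
  | 0, φ, _ => by
      simp only [Finset.univ_eq_empty, Finset.prod_empty]
      rw [Measure.pi_of_empty]
      exact integrable_const _
  | (n+1), φ, hφ => by
      have mp := (MeasureTheory.measurePreserving_piFinSuccAbove (fun _ : Fin (n+1) => ν) 0).symm
      rw [← mp.integrable_comp_emb (MeasurableEquiv.measurableEmbedding _)]
      simp_rw [MeasurableEquiv.piFinSuccAbove_symm_apply, Fin.insertNthEquiv,
        Fin.prod_univ_succ, Fin.insertNth_zero]
      simp only [Fin.zero_succAbove, Function.comp_def, Fin.cons_zero, Fin.cons_succ,
        Equiv.coe_fn_mk]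
      exact Integrable.mul_prod (hφ 0)
        (integrable_pi_prod ν (fun i => φ i.succ) (fun i => hφ _))

theorem integral_pi_prod (ν : Measure ℝ) [SigmaFinite ν] :
    ∀ {n : ℕ} (φ : Fin n → ℝ → ℝ),
      (∫ x : Fin n → ℝ, ∏ i, φ i (x i) ∂(Measure.pi fun _ => ν)) = ∏ i, ∫ t, φ i t ∂ν
  | 0, φ => by
      simp [Measure.pi_of_empty, Measure.real]
  | (n+1), φ => by
      rw [← ((MeasureTheory.measurePreserving_piFinSuccAbove
        (fun _ : Fin (n+1) => ν) 0).symm).integral_comp']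
      simp_rw [MeasurableEquiv.piFinSuccAbove_symm_apply, Fin.insertNthEquiv,
        Fin.prod_univ_succ, Fin.insertNth_zero]
      simp only [Fin.zero_succAbove, Fin.cons_zero, Fin.cons_succ, Equiv.coe_fn_mk, cast_eq]
      rw [integral_prod_mul (μ := ν) (ν := Measure.pi fun _ : Fin n => ν)
        (f := φ 0) (g := fun y : Fin n → ℝ => ∏ i : Fin n, φ i.succ (y i)),
        integral_pi_prod ν (fun i => φ i.succ)]


/-- determinant expansion with columns permuted -/
theorem det_expand {n : ℕ} (M : Matrix (Fin n) (Fin n) ℝ) :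
    M.det = ∑ σ : Equiv.Perm (Fin n), ((Equiv.Perm.sign σ : ℤ) : ℝ) * ∏ i, M i (σ i) := by
  rw [← Matrix.det_transpose, Matrix.det_apply']
  rfl

end AndreiefAux

open AndreiefAux

/-- Andréief's identity. For integrable functions `f_1,...,f_n`,
`g_1,...,g_n` on `ℝ` with respect to a (σ-finite Borel) measure `ν`, the integral over
the ordered simplex `{x_1 ≤ ... ≤ x_n}` of `det(f_j(x_i)) · det(g_j(x_i))` with respect
to `ν^n` equals `det(∫ f_i g_j dν)`. -/
theorem andreief_identity (n : ℕ) (ν : Measure ℝ) [SigmaFinite ν]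
    (f g : Fin n → ℝ → ℝ)
    (hf : ∀ i, Integrable (f i) ν) (hg : ∀ i, Integrable (g i) ν)
    (hfg : ∀ i j, Integrable (fun t => f i t * g j t) ν) :
    ∫ x in {x : Fin n → ℝ | ∀ i j : Fin n, i ≤ j → x i ≤ x j},
        (Matrix.of fun i j : Fin n => f j (x i)).det *
          (Matrix.of fun i j : Fin n => g j (x i)).det
        ∂(Measure.pi fun _ => ν)
      = (Matrix.of fun i j : Fin n => ∫ t, f i t * g j t ∂ν).det := by
  classical
  set μ : Measure (Fin n → ℝ) := Measure.pi fun _ => ν with hμdef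
  set S : Set (Fin n → ℝ) := {x : Fin n → ℝ | ∀ i j : Fin n, i ≤ j → x i ≤ x j} with hSdef
  -- abbreviations
  let G : (Fin n → ℝ) → ℝ := fun x => (Matrix.of fun i j : Fin n => g j (x i)).det
  let F : (Fin n → ℝ) → ℝ := fun x => (Matrix.of fun i j : Fin n => f j (x i)).det
  let H : (Fin n → ℝ) → ℝ := fun x => (∏ i, f i (x i)) * G x
  have hGx : ∀ x : Fin n → ℝ,
      G x = ∑ τ : Equiv.Perm (Fin n), ((Equiv.Perm.sign τ : ℤ) : ℝ) * ∏ i, g (τ i) (x i) :=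
    fun x => det_expand _
  have hFx : ∀ x : Fin n → ℝ,
      F x = ∑ τ : Equiv.Perm (Fin n), ((Equiv.Perm.sign τ : ℤ) : ℝ) * ∏ i, f (τ i) (x i) :=
    fun x => det_expand _
  -- expansion of (∏ F') * G as a sum over permutations
  have hexp : ∀ (F' : Fin n → ℝ → ℝ) (x : Fin n → ℝ),
      (∏ i, F' i (x i)) * G x
        = ∑ τ : Equiv.Perm (Fin n), ((Equiv.Perm.sign τ : ℤ) : ℝ)
            * ∏ i, (F' i (x i) * g (τ i) (x i)) := by
    intro F' x
    rw [hGx, Finset.mul_sum]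
    refine Finset.sum_congr rfl fun τ _ => ?_
    rw [Finset.prod_mul_distrib]
    ring
  -- integrability
  have hint : ∀ (F' : Fin n → ℝ → ℝ), (∀ i j, Integrable (fun t => F' i t * g j t) ν) →
      Integrable (fun x => (∏ i, F' i (x i)) * G x) μ := by
    intro F' h
    have heq : (fun x : Fin n → ℝ => (∏ i, F' i (x i)) * G x)
        = fun x => ∑ τ : Equiv.Perm (Fin n), ((Equiv.Perm.sign τ : ℤ) : ℝ)
            * ∏ i, (F' i (x i) * g (τ i) (x i)) := funext fun x => hexp F' x
    rw [heq]
    exact integrable_finset_sum _ fun τ _ =>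
      ((integrable_pi_prod ν (fun i t => F' i t * g (τ i) t) (fun i => h i (τ i))).const_mul _)
  have hHint : Integrable H μ := hint f hfg
  -- Step A : RHS = ∫ H
  have hRHS : (Matrix.of fun i j : Fin n => ∫ t, f i t * g j t ∂ν).det = ∫ x, H x ∂μ := by
    rw [det_expand]
    have h1 : ∀ τ : Equiv.Perm (Fin n),
        ((Equiv.Perm.sign τ : ℤ) : ℝ) * ∏ i, (Matrix.of fun i j : Fin n => ∫ t, f i t * g j t ∂ν) i (τ i)
          = ∫ x, ((Equiv.Perm.sign τ : ℤ) : ℝ) * ∏ i, (f i (x i) * g (τ i) (x i)) ∂μ := by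
      intro τ
      rw [integral_const_mul]
      congr 1
      exact (integral_pi_prod ν (fun i t => f i t * g (τ i) t)).symm
    rw [Finset.sum_congr rfl fun τ _ => h1 τ]
    rw [← integral_finset_sum _ fun τ _ =>
      ((integrable_pi_prod ν (fun i t => f i t * g (τ i) t) (fun i => hfg i (τ i))).const_mul _)]
    congr 1
    funext x
    exact (hexp f x).symm
  -- membership in S is monotonicity
  have hmono_mem : ∀ x : Fin n → ℝ, x ∈ S ↔ Monotone x :=
    fun x => ⟨fun h a b hab => h a b hab, fun h i j hij => h hij⟩
  have hSm : MeasurableSet S := by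
    have hS2 : S = ⋂ (i : Fin n) (j : Fin n), {x : Fin n → ℝ | i ≤ j → x i ≤ x j} := by
      ext x; simp only [hSdef, Set.mem_iInter, Set.mem_setOf_eq]
    rw [hS2]
    refine MeasurableSet.iInter fun i => MeasurableSet.iInter fun j => ?_
    by_cases hij : i ≤ j
    · have h3 : {x : Fin n → ℝ | i ≤ j → x i ≤ x j} = {x : Fin n → ℝ | x i ≤ x j} := by
        ext x; simp [hij]
      rw [h3]
      exact measurableSet_le (measurable_pi_apply i) (measurable_pi_apply j)
    · have h3 : {x : Fin n → ℝ | i ≤ j → x i ≤ x j} = Set.univ := by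
        ext x; simp [hij]
      rw [h3]; exact MeasurableSet.univ
  have hMσm : ∀ σ : Equiv.Perm (Fin n), MeasurableSet ((fun x : Fin n → ℝ => x ∘ σ) ⁻¹' S) :=
    fun σ => hSm.preimage (measurable_pi_iff.mpr fun i => measurable_pi_apply _)
  -- pointwise counting identity
  have hkey : ∀ x : Fin n → ℝ,
      H x = ∑ σ : Equiv.Perm (Fin n), ((fun y : Fin n → ℝ => y ∘ σ) ⁻¹' S).indicator H x := by
    intro x
    by_cases hinj : Function.Injective x
    · have huniq : ∀ σ : Equiv.Perm (Fin n),
          x ∈ (fun y : Fin n → ℝ => y ∘ σ) ⁻¹' S ↔ σ = Tuple.sort x := by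
        intro σ
        constructor
        · intro hmem
          have hmono : Monotone (x ∘ σ) := (hmono_mem _).1 hmem
          have h2 := (Tuple.comp_sort_eq_comp_iff_monotone (f := x) (σ := σ)).mpr hmono
          exact Equiv.ext fun i => hinj (congrFun h2 i)
        · rintro rfl
          exact (hmono_mem _).2 (Tuple.monotone_sort x)
      rw [Finset.sum_eq_single (Tuple.sort x)]
      · rw [Set.indicator_of_mem ((huniq _).mpr rfl)]
      · intro σ _ hσ
        exact Set.indicator_of_notMem (fun hmem => hσ ((huniq σ).mp hmem)) _
      · intro habs; exact absurd (Finset.mem_univ _) habs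
    · obtain ⟨i, j, hxij, hne⟩ := Function.not_injective_iff.mp hinj
      have hG0 : G x = 0 := by
        refine Matrix.det_zero_of_row_eq hne (funext fun k => ?_)
        simp [Matrix.of_apply, hxij]
      have hH0 : H x = 0 := by
        show (∏ i, f i (x i)) * G x = 0
        rw [hG0, mul_zero]
      rw [hH0]
      symm
      refine Finset.sum_eq_zero fun σ _ => ?_
      by_cases hmem : x ∈ (fun y : Fin n → ℝ => y ∘ σ) ⁻¹' S
      · rw [Set.indicator_of_mem hmem, hH0]
      · rw [Set.indicator_of_notMem hmem]
  -- split ∫ H into permutation pieces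
  have hsplit : ∫ x, H x ∂μ
      = ∑ σ : Equiv.Perm (Fin n),
          ∫ x, ((fun y : Fin n → ℝ => y ∘ σ) ⁻¹' S).indicator H x ∂μ := by
    rw [← integral_finset_sum _ fun σ _ => hHint.indicator (hMσm σ)]
    congr 1
    funext x
    exact hkey x
  -- change of variables for each permutation
  have hpiece : ∀ σ : Equiv.Perm (Fin n),
      ∫ x, ((fun y : Fin n → ℝ => y ∘ σ) ⁻¹' S).indicator H x ∂μ
        = ∫ x, S.indicator (fun y => ((Equiv.Perm.sign σ : ℤ) : ℝ)
            * ((∏ i, f (σ i) (y i)) * G y)) x ∂μ := by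
    intro σ
    have mp : MeasurePreserving (MeasurableEquiv.piCongrLeft (fun _ : Fin n => ℝ) σ) μ μ :=
      measurePreserving_piCongrLeft (fun _ : Fin n => ν) σ
    set e := MeasurableEquiv.piCongrLeft (fun _ : Fin n => ℝ) σ with hedef
    have heT : ∀ (x : Fin n → ℝ) (j : Fin n), e x j = x (σ.symm j) := by
      intro x j
      have h1 : (MeasurableEquiv.piCongrLeft (fun _ : Fin n => ℝ) σ) x (σ (σ.symm j))
          = x (σ.symm j) := MeasurableEquiv.piCongrLeft_apply_apply (β := fun _ : Fin n => ℝ) σ x (σ.symm j)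
      rw [hedef]
      simpa using h1
    rw [← mp.integral_comp']
    congr 1
    funext x
    have hcm : e x ∈ (fun y : Fin n → ℝ => y ∘ σ) ⁻¹' S ↔ x ∈ S := by
      have hc : (e x) ∘ ⇑σ = x := funext fun i => by
        rw [Function.comp_apply, heT]; simp
      show (e x) ∘ ⇑σ ∈ S ↔ x ∈ S
      rw [hc]
    have hval : H (e x) = ((Equiv.Perm.sign σ : ℤ) : ℝ) * ((∏ i, f (σ i) (x i)) * G x) := by
      have hprod : (∏ i, f i (e x i)) = ∏ i, f (σ i) (x i) := by
        have h2 := Equiv.prod_comp σ (fun i => f i (x (σ.symm i)))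
        simp only [Equiv.symm_apply_apply] at h2
        calc (∏ i, f i (e x i)) = ∏ i, f i (x (σ.symm i)) :=
              Finset.prod_congr rfl fun i _ => by rw [heT]
          _ = ∏ i, f (σ i) (x i) := h2.symm
      have hGe : G (e x) = ((Equiv.Perm.sign σ : ℤ) : ℝ) * G x := by
        have h2 : (Matrix.of fun i j : Fin n => g j (e x i))
            = (Matrix.of fun i j : Fin n => g j (x i)).submatrix ⇑(σ⁻¹) id := by
          ext i j
          simp only [Matrix.submatrix_apply, Matrix.of_apply, heT, id]
          rfl
        show (Matrix.of fun i j : Fin n => g j (e x i)).det = _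
        rw [h2, Matrix.det_permute]
        rw [Equiv.Perm.sign_inv]
      show (∏ i, f i (e x i)) * G (e x) = _
      rw [hprod, hGe]; ring
    by_cases hx : x ∈ S
    · rw [Set.indicator_of_mem (hcm.mpr hx), Set.indicator_of_mem hx, hval]
    · rw [Set.indicator_of_notMem (fun h => hx (hcm.mp h)), Set.indicator_of_notMem hx]
  -- sum the pieces back into F · G
  have hsum2 : (∑ σ : Equiv.Perm (Fin n),
        ∫ x, S.indicator (fun y => ((Equiv.Perm.sign σ : ℤ) : ℝ)
          * ((∏ i, f (σ i) (y i)) * G y)) x ∂μ)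
      = ∫ x, S.indicator (fun y => F y * G y) x ∂μ := by
    rw [← integral_finset_sum _ fun σ _ =>
      ((hint (fun i => f (σ i)) (fun i j => hfg (σ i) j)).const_mul _).indicator hSm]
    congr 1
    funext x
    by_cases hx : x ∈ S
    · simp only [Set.indicator_of_mem hx]
      rw [hFx, Finset.sum_mul]
      exact Finset.sum_congr rfl fun σ _ => by ring
    · simp only [Set.indicator_of_notMem hx, Finset.sum_const_zero]
  have hLHS : (∫ x in S, F x * G x ∂μ) = ∫ x, H x ∂μ := by
    calc (∫ x in S, F x * G x ∂μ)
        = ∫ x, S.indicator (fun y => F y * G y) x ∂μ := (integral_indicator hSm).symm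
      _ = ∑ σ : Equiv.Perm (Fin n),
            ∫ x, S.indicator (fun y => ((Equiv.Perm.sign σ : ℤ) : ℝ)
              * ((∏ i, f (σ i) (y i)) * G y)) x ∂μ := hsum2.symm
      _ = ∑ σ : Equiv.Perm (Fin n),
            ∫ x, ((fun y : Fin n → ℝ => y ∘ σ) ⁻¹' S).indicator H x ∂μ :=
          Finset.sum_congr rfl fun σ _ => (hpiece σ).symm
      _ = ∫ x, H x ∂μ := hsplit.symm
  rw [hRHS]
  exact hLHS
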